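/- For every m ≥ 3, the complete bipartite graph K_{m,m} admits a proper edge colouring with m colours in which some perfect matching is rainbow (its m edges all receive distinct colours). -/

import Mathlib

open SimpleGraph

variable {V : Type*} {W : Type*}

/-- The direct (tensor) product of two simple graphs. -/
def tensorProd (G : SimpleGraph V) (H : SimpleGraph W) : SimpleGraph (V × W) where
  Adj a b := G.Adj a.1 b.1 ∧ H.Adj a.2 b.2
  symm := ⟨fun _ _ h => ⟨G.adj_symm h.1, H.adj_symm h.2⟩⟩
  loopless := ⟨fun a h => G.loopless.irrefl a.1 h.1⟩

instance tensorProd.adjDecidable (G : SimpleGraph V) (H : SimpleGraph W)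
    [DecidableRel G.Adj] [DecidableRel H.Adj] : DecidableRel (tensorProd G H).Adj :=
  fun _ _ => instDecidableAnd

/-- A proper edge colouring with `n` colours, given as a symmetric function on adjacent pairs. -/
def IsEdgeColoring (G : SimpleGraph V) (n : ℕ) (ce : V → V → Fin n) : Prop :=
  (∀ u v, G.Adj u v → ce u v = ce v u) ∧
  (∀ u v w, G.Adj u v → G.Adj u w → v ≠ w → ce u v ≠ ce u w)

/-- A proper total colouring with `n` colours. -/
def IsTotalColoring (G : SimpleGraph V) (n : ℕ) (cv : V → Fin n) (ce : V → V → Fin n) : Prop :=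
  (∀ u v, G.Adj u v → ce u v = ce v u) ∧
  (∀ u v, G.Adj u v → cv u ≠ cv v) ∧
  (∀ u v w, G.Adj u v → G.Adj u w → v ≠ w → ce u v ≠ ce u w) ∧
  (∀ u v, G.Adj u v → ce u v ≠ cv u ∧ ce u v ≠ cv v)

/-- The total chromatic number of a graph. -/
noncomputable def totalChromaticNumber (G : SimpleGraph V) : ℕ :=
  sInf {n | ∃ cv ce, IsTotalColoring G n cv ce}

/-- Adjacency of the crown graph. -/
def crownAdj {m : ℕ} : Fin m ⊕ Fin m → Fin m ⊕ Fin m → Prop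
  | Sum.inl k, Sum.inr t => k ≠ t
  | Sum.inr k, Sum.inl t => k ≠ t
  | _, _ => False

/-- The crown graph `J_{2m}`: `K_{m,m}` minus a perfect matching. -/
def crown (m : ℕ) : SimpleGraph (Fin m ⊕ Fin m) where
  Adj := crownAdj
  symm := ⟨by rintro (k|k) (t|t) h <;> simp only [crownAdj] at * <;> exact fun e => h e.symm⟩
  loopless := ⟨by rintro (k|k) h <;> simp only [crownAdj] at h⟩

instance crown.adjDecidable (m : ℕ) : DecidableRel (crown m).Adj := fun a b =>
  match a, b with
  | Sum.inl k, Sum.inr t => (inferInstance : Decidable (k ≠ t))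
  | Sum.inr k, Sum.inl t => (inferInstance : Decidable (k ≠ t))
  | Sum.inl _, Sum.inl _ => isFalse (fun h => h)
  | Sum.inr _, Sum.inr _ => isFalse (fun h => h)


private lemma modcase (a n : ℕ) (h : a < 2*n) : a % n = if a < n then a else a - n := by
  split
  · exact Nat.mod_eq_of_lt ‹_›
  · rw [Nat.mod_eq_sub_mod (by omega), Nat.mod_eq_of_lt (by omega)]

private theorem latin_key (m : ℕ) (hm : 3 ≤ m) :
    ∃ (f : ZMod m → ZMod m → ZMod m) (σ : Equiv.Perm (ZMod m)),
      (∀ a, Function.Injective (f a)) ∧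
      (∀ b, Function.Injective (fun a => f a b)) ∧
      Function.Injective (fun i => f i (σ i)) := by
  haveI : NeZero m := ⟨by omega⟩
  rcases Nat.even_or_odd m with he | ho
  · -- even case
    obtain ⟨k, rfl⟩ := he
    have hk : 2 ≤ k := by omega
    set M := k + k with hM
    set kk : ZMod M := ((k : ℕ) : ZMod M) with hkk
    have hvkk : kk.val = k := ZMod.val_cast_of_lt (by omega)
    have hkk0 : kk ≠ 0 := by
      intro h
      have := congrArg ZMod.val h
      rw [hvkk, ZMod.val_zero] at this
      omega
    have hsum : kk + kk = 0 := by
      rw [hkk, ← Nat.cast_add, ZMod.natCast_self]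
    set f : ZMod M → ZMod M → ZMod M :=
      fun a b => if a = 0 ∨ a = kk then Equiv.swap (0 : ZMod M) kk (a + b) else a + b with hf
    set tg : ℕ → ℕ := fun t => if t = 0 then 0 else if t ≤ k then t + k - 1 else t - k with htg
    have htglt : ∀ t, t < M → tg t < M := by
      intro t ht; simp only [htg]; split_ifs <;> omega
    set g : ZMod M → ZMod M := fun i => ((tg i.val : ℕ) : ZMod M) with hg
    have ginj : Function.Injective g := by
      intro x y h
      have hx := ZMod.val_lt x
      have hy := ZMod.val_lt y
      have h2 := congrArg ZMod.val h
      simp only [hg, ZMod.val_cast_of_lt (htglt _ hx), ZMod.val_cast_of_lt (htglt _ hy)] at h2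
      apply ZMod.val_injective
      simp only [htg] at h2
      split_ifs at h2 <;> omega
    refine ⟨f, Equiv.ofBijective g ginj.bijective_of_finite, ?_, ?_, ?_⟩
    · -- rows injective
      intro a x y h
      simp only [hf] at h
      split_ifs at h
      · exact add_left_cancel ((Equiv.swap (0 : ZMod M) kk).injective h)
      · exact add_left_cancel h
    · -- columns injective
      intro b x y h
      simp only [hf] at h
      have mixed : ∀ x y : ZMod M, (x = 0 ∨ x = kk) → ¬(y = 0 ∨ y = kk) →
          Equiv.swap (0 : ZMod M) kk (x + b) = y + b → y = 0 ∨ y = kk := by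
        intro x y hx hy hswap
        by_cases h1 : x + b = 0
        · rw [h1, Equiv.swap_apply_left] at hswap
          have hyy : y = kk + x := by linear_combination - hswap - h1
          rcases hx with rfl | rfl
          · right; rw [hyy, add_zero]
          · left; rw [hyy, hsum]
        · by_cases h2 : x + b = kk
          · rw [h2, Equiv.swap_apply_right] at hswap
            have hyy : y = x - kk := by linear_combination - hswap - h2
            rcases hx with rfl | rfl
            · right; rw [hyy, zero_sub]; exact neg_eq_of_add_eq_zero_left hsum
            · left; rw [hyy, sub_self]
          · rw [Equiv.swap_apply_of_ne_of_ne h1 h2] at hswap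
            have := add_right_cancel hswap
            rcases hx with rfl | rfl
            · exact Or.inl this.symm
            · exact Or.inr this.symm
      by_cases hx : (x = 0 ∨ x = kk) <;> by_cases hy2 : (y = 0 ∨ y = kk)
      · rw [if_pos hx, if_pos hy2] at h
        exact add_right_cancel ((Equiv.swap (0 : ZMod M) kk).injective h)
      · rw [if_pos hx, if_neg hy2] at h
        exact absurd (mixed x y hx hy2 h) hy2
      · rw [if_neg hx, if_pos hy2] at h
        exact absurd (mixed y x hy2 hx h.symm) hx
      · rw [if_neg hx, if_neg hy2] at h
        exact add_right_cancel h
    · -- rainbow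
      set cl : ℕ → ℕ := fun t => if t = 0 then k else if t ≤ k then 2*t + k - 1 else 2*t - k
        with hcl
      have hcast : ∀ i : ZMod M, i = ((i.val : ℕ) : ZMod M) := fun i =>
        (ZMod.natCast_rightInverse i).symm
      have key : ∀ i : ZMod M, f i (g i) = ((cl i.val : ℕ) : ZMod M) := by
        intro i
        have hvi := ZMod.val_lt i
        have hcond : (i = 0 ∨ i = kk) ↔ (i.val = 0 ∨ i.val = k) := by
          constructor
          · rintro (rfl | rfl)
            · exact Or.inl ZMod.val_zero
            · exact Or.inr hvkk
          · rintro (h | h)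
            · left; apply ZMod.val_injective; rw [h, ZMod.val_zero]
            · right; apply ZMod.val_injective; rw [h, hvkk]
        by_cases h0 : i.val = 0
        · have hi0 : i = 0 := by apply ZMod.val_injective; rw [h0, ZMod.val_zero]
          simp only [hf, hg, hcl, hi0, ZMod.val_zero, htg]
          simp [Equiv.swap_apply_left, hkk]
        · by_cases hik : i.val = k
          · have hik' : i = kk := by apply ZMod.val_injective; rw [hik, hvkk]
            have hgk : g i = ((k + k - 1 : ℕ) : ZMod M) := by
              simp only [hg, htg, hik]
              rw [if_neg (by omega), if_pos le_rfl]
            have harg : i + g i = (((k - 1 : ℕ)) : ZMod M) := by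
              rw [hgk, hik', hkk, ← Nat.cast_add]
              have : k + (k + k - 1) = (k - 1) + M := by omega
              rw [this, Nat.cast_add, ZMod.natCast_self, add_zero]
            have hne0 : (((k - 1 : ℕ)) : ZMod M) ≠ 0 := by
              intro h
              have := congrArg ZMod.val h
              rw [ZMod.val_cast_of_lt (by omega), ZMod.val_zero] at this
              omega
            have hnekk : (((k - 1 : ℕ)) : ZMod M) ≠ kk := by
              intro h
              have := congrArg ZMod.val h
              rw [ZMod.val_cast_of_lt (by omega), hvkk] at this
              omega
            have hclv : ((cl i.val : ℕ) : ZMod M) = (((k - 1 : ℕ)) : ZMod M) := by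
              simp only [hcl, hik]
              rw [if_neg (by omega), if_pos le_rfl]
              have : 2*k + k - 1 = (k - 1) + M := by omega
              rw [this, Nat.cast_add, ZMod.natCast_self, add_zero]
            rw [hclv]
            simp only [hf, if_pos (Or.inr hik'), harg]
            exact Equiv.swap_apply_of_ne_of_ne hne0 hnekk
          · -- i.val ∉ {0, k}
            have hcond' : ¬ (i = 0 ∨ i = kk) := by
              rw [hcond]; push_neg; exact ⟨h0, hik⟩
            simp only [hf, if_neg hcond', hg]
            have ht : i = ((i.val : ℕ) : ZMod M) := hcast i
            set t := i.val with hT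
            rw [ht, ← Nat.cast_add]
            have hnat : t + tg t = cl t := by
              simp only [htg, hcl]; split_ifs <;> omega
            rw [hnat]
      intro x y h
      simp only [Equiv.ofBijective_apply, key] at h
      rw [ZMod.natCast_eq_natCast_iff'] at h
      have hx := ZMod.val_lt x
      have hy := ZMod.val_lt y
      have hbx : cl x.val < 2 * M := by simp only [hcl]; split_ifs <;> omega
      have hby : cl y.val < 2 * M := by simp only [hcl]; split_ifs <;> omega
      rw [modcase _ _ hbx, modcase _ _ hby] at h
      apply ZMod.val_injective
      simp only [hcl] at h
      split_ifs at h <;> omega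
  · -- odd case
    refine ⟨fun a b => a + b, Equiv.refl _, ?_, ?_, ?_⟩
    · intro a x y h; exact add_left_cancel h
    · intro b x y h; exact add_right_cancel h
    · have h2 : IsUnit (2 : ZMod m) := by
        have hc : Nat.Coprime 2 m := Nat.coprime_two_left.mpr ho
        have := (ZMod.unitOfCoprime 2 hc).isUnit
        simpa using this
      intro x y h
      simp only [Equiv.refl_apply] at h
      exact h2.mul_left_cancel (by rw [two_mul, two_mul]; exact h)

theorem Kmm_edgeColoring_rainbow_matching (m : ℕ) (hm : 3 ≤ m) :
    ∃ (ce : (Fin m ⊕ Fin m) → (Fin m ⊕ Fin m) → Fin m) (σ : Equiv.Perm (Fin m)),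
      IsEdgeColoring (completeBipartiteGraph (Fin m) (Fin m)) m ce ∧
      Function.Injective (fun k => ce (Sum.inl k) (Sum.inr (σ k))) := by
  obtain ⟨n, rfl⟩ : ∃ n, m = n + 1 := ⟨m - 1, by omega⟩
  obtain ⟨f, σ, hrow, hcol, hrain⟩ := latin_key (n + 1) hm
  refine ⟨fun u v => Sum.elim
      (fun a => Sum.elim (fun a' => f a a') (fun b => f a b) v)
      (fun b => Sum.elim (fun a => f a b) (fun b' => f b b') v) u, σ, ⟨?_, ?_⟩, ?_⟩
  · rintro (a|a) (b|b) h
    · simp [completeBipartiteGraph] at h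
    · rfl
    · rfl
    · simp [completeBipartiteGraph] at h
  · rintro (a|a) (b|b) (c|c) h1 h2 hne
    · exact absurd h1 (by simp [completeBipartiteGraph])
    · exact absurd h1 (by simp [completeBipartiteGraph])
    · exact absurd h2 (by simp [completeBipartiteGraph])
    · exact fun hh => hne (congrArg Sum.inr (hrow a hh))
    · exact fun hh => hne (congrArg Sum.inl (hcol a hh))
    · exact absurd h2 (by simp [completeBipartiteGraph])
    · exact absurd h1 (by simp [completeBipartiteGraph])
    · exact absurd h1 (by simp [completeBipartiteGraph])
  · exact hrain
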